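/- Let (P, W) be a joint type on 𝒳 × 𝒴 of length n (i.e., n·P(x)W(y|x) ∈ ℕ for all x, y) and fix a sequence xⁿ ∈ 𝒳ⁿ with empirical distribution P. Let Y₁,…,Yₙ be independent with Yᵢ ~ Q(·|xᵢ) for a channel Q. Then the probability that (xⁿ, Yⁿ) has joint type P·W is at least (n+1)^{-|𝒳||𝒴|} · exp(−n·D(W‖Q|P)), provided W(·|x) is absolutely continuous w.r.t. Q(·|x) whenever P(x)>0. -/

import Mathlib

open scoped BigOperators

def IsPMF {α : Type*} [Fintype α] (p : α → ℝ) : Prop :=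
  (∀ a, 0 ≤ p a) ∧ ∑ a, p a = 1

/-- Real-valued KL divergence with the convention that terms with `p a = 0` vanish. -/
noncomputable def klReal {α : Type*} [Fintype α] (p q : α → ℝ) : ℝ :=
  ∑ a, if p a = 0 then 0 else p a * Real.log (p a / q a)

/-- Conditional divergence `D(W‖Q|P) = Σ_x P(x) D(W(·|x)‖Q(·|x))`. -/
noncomputable def condKLReal {𝒳 𝒴 : Type*} [Fintype 𝒳] [Fintype 𝒴]
    (P : 𝒳 → ℝ) (W Q : 𝒳 → 𝒴 → ℝ) : ℝ :=
  ∑ x, P x * klReal (W x) (Q x)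

/-- Empirical distribution (type) of a sequence. -/
noncomputable def empDist {𝒳 : Type*} [Fintype 𝒳] [DecidableEq 𝒳] {n : ℕ}
    (x : Fin n → 𝒳) : 𝒳 → ℝ :=
  fun a => ((Finset.univ.filter fun i => x i = a).card : ℝ) / n

/-- Empirical joint distribution of a pair of sequences. -/
noncomputable def jointType {𝒳 𝒴 : Type*} [Fintype 𝒳] [Fintype 𝒴]
    [DecidableEq 𝒳] [DecidableEq 𝒴] {n : ℕ}
    (x : Fin n → 𝒳) (y : Fin n → 𝒴) : 𝒳 × 𝒴 → ℝ :=
  fun p => ((Finset.univ.filter fun i => x i = p.1 ∧ y i = p.2).card : ℝ) / n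

open Finset

section Aux

-- S1: (l+d)! ≤ l! * (l+d)^d
lemma aux_S1 (l : ℕ) : ∀ d : ℕ, (l + d).factorial ≤ l.factorial * (l + d) ^ d := by
  intro d
  induction d with
  | zero => simp
  | succ d ih =>
    have h1 : (l + (d+1)).factorial = (l + d + 1) * (l + d).factorial := by
      rw [← Nat.add_assoc]; exact Nat.factorial_succ _
    rw [h1]
    calc (l + d + 1) * (l + d).factorial ≤ (l + d + 1) * (l.factorial * (l + d) ^ d) :=
          Nat.mul_le_mul_left _ ih
      _ ≤ l.factorial * (l + (d+1)) ^ (d+1) := by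
          rw [pow_succ]
          have hb : (l + d) ^ d ≤ (l + (d+1)) ^ d :=
            Nat.pow_le_pow_left (by omega) d
          calc (l + d + 1) * (l.factorial * (l + d) ^ d)
              = l.factorial * ((l + d) ^ d * (l + d + 1)) := by ring
            _ ≤ l.factorial * ((l + (d+1)) ^ d * (l + (d+1))) := by
                exact Nat.mul_le_mul_left _ (Nat.mul_le_mul hb (by omega))

-- key per-factor inequality: k! * k^l ≤ l! * k^k
lemma aux_fact_pow (k l : ℕ) : k.factorial * k ^ l ≤ l.factorial * k ^ k := by
  rcases le_total l k with h | h
  · obtain ⟨d, rfl⟩ := Nat.exists_eq_add_of_le h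
    calc (l + d).factorial * (l + d) ^ l ≤ (l.factorial * (l + d) ^ d) * (l + d) ^ l :=
          Nat.mul_le_mul_right _ (aux_S1 l d)
      _ = l.factorial * (l + d) ^ (l + d) := by rw [mul_assoc, ← pow_add, add_comm d l]
  · obtain ⟨d, rfl⟩ := Nat.exists_eq_add_of_le h
    have h2 : k.factorial * k ^ d ≤ (k + d).factorial := by
      calc k.factorial * k ^ d ≤ k.factorial * (k + 1) ^ d :=
            Nat.mul_le_mul_left _ (Nat.pow_le_pow_left (by omega) d)
        _ ≤ (k + d).factorial := Nat.factorial_mul_pow_le_factorial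
    calc k.factorial * k ^ (k + d) = (k.factorial * k ^ d) * k ^ k := by
          rw [mul_assoc, ← pow_add, add_comm d k]
      _ ≤ (k + d).factorial * k ^ k := Nat.mul_le_mul_right _ h2

-- term comparison for the multinomial theorem
lemma aux_term_le {𝒴 : Type*} [Fintype 𝒴] (k l : 𝒴 → ℕ) (h : ∑ b, l b = ∑ b, k b) :
    Nat.multinomial univ l * ∏ b, (k b) ^ (l b) ≤ Nat.multinomial univ k * ∏ b, (k b) ^ (k b) := by
  have hl := Nat.multinomial_spec univ l
  have hk := Nat.multinomial_spec univ k
  have hpos : 0 < (∏ b, (l b).factorial) * ∏ b, (k b).factorial :=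
    Nat.mul_pos (prod_pos fun b _ => (l b).factorial_pos) (prod_pos fun b _ => (k b).factorial_pos)
  apply Nat.le_of_mul_le_mul_right _ hpos
  have e1 : Nat.multinomial univ l * (∏ b, (k b) ^ (l b)) * ((∏ b, (l b).factorial) * ∏ b, (k b).factorial)
      = (∑ b, l b).factorial * ∏ b, ((k b).factorial * (k b) ^ (l b)) := by
    rw [prod_mul_distrib]
    calc Nat.multinomial univ l * (∏ b, (k b) ^ (l b)) * ((∏ b, (l b).factorial) * ∏ b, (k b).factorial)
        = ((∏ b, (l b).factorial) * Nat.multinomial univ l) * ((∏ b, (k b).factorial) * ∏ b, (k b) ^ (l b)) := by ring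
      _ = _ := by rw [hl]
  have e2 : Nat.multinomial univ k * (∏ b, (k b) ^ (k b)) * ((∏ b, (l b).factorial) * ∏ b, (k b).factorial)
      = (∑ b, k b).factorial * ∏ b, ((l b).factorial * (k b) ^ (k b)) := by
    rw [prod_mul_distrib]
    calc Nat.multinomial univ k * (∏ b, (k b) ^ (k b)) * ((∏ b, (l b).factorial) * ∏ b, (k b).factorial)
        = ((∏ b, (k b).factorial) * Nat.multinomial univ k) * ((∏ b, (l b).factorial) * ∏ b, (k b) ^ (k b)) := by ring
      _ = _ := by rw [hk]
  rw [e1, e2, h]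
  exact Nat.mul_le_mul_left _ (prod_le_prod' fun b _ => aux_fact_pow (k b) (l b))

lemma aux_card_piAntidiag {𝒴 : Type*} [Fintype 𝒴] [DecidableEq 𝒴] (m : ℕ) :
    (piAntidiag (univ : Finset 𝒴) m).card ≤ (m + 1) ^ Fintype.card 𝒴 := by
  have : (piAntidiag (univ : Finset 𝒴) m).card ≤ (univ : Finset (𝒴 → Fin (m+1))).card := by
    apply Finset.card_le_card_of_injOn (fun l b => ⟨min (l b) m, by omega⟩)
    · intro l hl; exact mem_univ _
    · intro l hl l' hl' h
      simp only [mem_coe, mem_piAntidiag] at hl hl'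
      funext b
      have hb : l b ≤ m := hl.1 ▸ Finset.single_le_sum (f := l) (fun _ _ => Nat.zero_le _) (mem_univ b)
      have hb' : l' b ≤ m := hl'.1 ▸ Finset.single_le_sum (f := l') (fun _ _ => Nat.zero_le _) (mem_univ b)
      have := congrFun h b
      simp only [Fin.mk.injEq] at this
      omega
  simpa using this

-- Lemma A: real lower bound on a multinomial coefficient
lemma aux_A {𝒴 : Type*} [Fintype 𝒴] [DecidableEq 𝒴] (k : 𝒴 → ℕ) (m : ℕ) (hm : ∑ b, k b = m) :
    (m : ℝ) ^ m ≤ (m + 1 : ℝ) ^ Fintype.card 𝒴 * (Nat.multinomial univ k : ℝ) * ∏ b, (k b : ℝ) ^ (k b) := by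
  have key : ((m : ℝ)) ^ m = ∑ l ∈ piAntidiag (univ : Finset 𝒴) m,
      (Nat.multinomial univ l : ℝ) * ∏ b, (k b : ℝ) ^ (l b) := by
    rw [← Finset.sum_pow_eq_sum_piAntidiag (univ : Finset 𝒴) (fun b => (k b : ℝ)) m]
    rw [← Nat.cast_sum, hm]
  rw [key]
  calc ∑ l ∈ piAntidiag (univ : Finset 𝒴) m, (Nat.multinomial univ l : ℝ) * ∏ b, (k b : ℝ) ^ (l b)
      ≤ ∑ l ∈ piAntidiag (univ : Finset 𝒴) m,
          (Nat.multinomial univ k : ℝ) * ∏ b, (k b : ℝ) ^ (k b) := by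
        apply Finset.sum_le_sum
        intro l hl
        rw [mem_piAntidiag] at hl
        have := aux_term_le k l (by rw [hl.1, hm])
        have hcast : ((Nat.multinomial univ l * ∏ b, (k b) ^ (l b) : ℕ) : ℝ)
            ≤ ((Nat.multinomial univ k * ∏ b, (k b) ^ (k b) : ℕ) : ℝ) := Nat.cast_le.mpr this
        push_cast at hcast
        exact hcast
    _ = (piAntidiag (univ : Finset 𝒴) m).card * ((Nat.multinomial univ k : ℝ) * ∏ b, (k b : ℝ) ^ (k b)) := by
        rw [Finset.sum_const, nsmul_eq_mul]
    _ ≤ (m + 1 : ℝ) ^ Fintype.card 𝒴 * ((Nat.multinomial univ k : ℝ) * ∏ b, (k b : ℝ) ^ (k b)) := by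
        apply mul_le_mul_of_nonneg_right
        · calc ((piAntidiag (univ : Finset 𝒴) m).card : ℝ) ≤ (((m+1) ^ Fintype.card 𝒴 : ℕ) : ℝ) :=
              Nat.cast_le.mpr (aux_card_piAntidiag m)
            _ = (m + 1 : ℝ) ^ Fintype.card 𝒴 := by push_cast; ring
        · positivity
    _ = _ := by ring

-- existence of a function with prescribed fiber sizes
lemma aux_exists_fn {ι 𝒴 : Type*} [Fintype ι] [DecidableEq ι] [Fintype 𝒴] [DecidableEq 𝒴]
    (k : 𝒴 → ℕ) (hk : ∑ b, k b = Fintype.card ι) :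
    ∃ f : ι → 𝒴, ∀ b, (univ.filter fun i => f i = b).card = k b := by
  have hcard : Fintype.card ι = Fintype.card (Σ b : 𝒴, Fin (k b)) := by
    simp [Fintype.card_sigma, hk]
  obtain ⟨e⟩ : Nonempty (ι ≃ Σ b : 𝒴, Fin (k b)) := ⟨Fintype.equivOfCardEq hcard⟩
  refine ⟨fun i => (e i).1, fun b => ?_⟩
  rw [← Fintype.card_subtype]
  have e2 : {i // (e i).1 = b} ≃ {p : Σ c : 𝒴, Fin (k c) // p.1 = b} :=
    e.subtypeEquiv (fun i => Iff.rfl)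
  have e3 : {p : Σ c : 𝒴, Fin (k c) // p.1 = b} ≃ Fin (k b) :=
    { toFun := fun p => Fin.cast (congrArg k p.2) p.1.2
      invFun := fun j => ⟨⟨b, j⟩, rfl⟩
      left_inv := by rintro ⟨⟨c, j⟩, rfl⟩; rfl
      right_inv := by intro j; rfl }
  rw [Fintype.card_congr (e2.trans e3), Fintype.card_fin]

-- core counting lemma: # functions with fibers of sizes k is at least the multinomial coeff
lemma aux_CL {ι 𝒴 : Type*} [Fintype ι] [DecidableEq ι] [Fintype 𝒴] [DecidableEq 𝒴]
    (k : 𝒴 → ℕ) (hk : ∑ b, k b = Fintype.card ι) :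
    Nat.multinomial univ k ≤ Fintype.card {f : ι → 𝒴 // ∀ b, (univ.filter fun i => f i = b).card = k b} := by
  obtain ⟨f₀, hf₀⟩ := aux_exists_fn k hk
  set C := {f : ι → 𝒴 // ∀ b, (univ.filter fun i => f i = b).card = k b}
  have key : Fintype.card (Equiv.Perm ι) ≤ Fintype.card C * ∏ b, (k b).factorial := by
    have hmem : ∀ σ : Equiv.Perm ι, ∀ b, (univ.filter fun i => f₀ (σ i) = b).card = k b := by
      intro σ b
      rw [← hf₀ b]
      apply Finset.card_bij (fun i _ => σ i)
      · intro i hi; simp only [mem_filter, mem_univ, true_and] at hi ⊢; exact hi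
      · intro i _ j _ h; exact σ.injective h
      · intro j hj; simp only [mem_filter, mem_univ, true_and] at hj
        exact ⟨σ.symm j, by simp [hj], by simp⟩
    set Ψ : Equiv.Perm ι → Σ g : C, ∀ b, ({i // f₀ i = b} ↪ {i // g.val i = b}) :=
      fun σ => ⟨⟨fun i => f₀ (σ i), hmem σ⟩,
        fun b => ⟨fun j => ⟨σ.symm j.val, by simp [j.prop]⟩,
          by intro j j' h; apply Subtype.ext; have := congrArg Subtype.val h
             exact σ.symm.injective this⟩⟩
    have hinj : Function.Injective Ψ := by
      intro σ τ h
      have hst : ∀ i : ι, σ.symm i = τ.symm i := by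
        intro i
        have h1 := congrArg (fun p : Σ g : C, ∀ b, ({j // f₀ j = b} ↪ {j // g.val j = b}) =>
          (p.2 (f₀ i) ⟨i, rfl⟩ : _).val) h
        exact h1
      have hst' : σ.symm = τ.symm := Equiv.ext hst
      calc σ = σ.symm.symm := rfl
        _ = τ.symm.symm := by rw [hst']
        _ = τ := rfl
    calc Fintype.card (Equiv.Perm ι) ≤ Fintype.card (Σ g : C, ∀ b, ({i // f₀ i = b} ↪ {i // g.val i = b})) :=
          Fintype.card_le_of_injective Ψ hinj
      _ = ∑ g : C, ∏ b, Fintype.card ({i // f₀ i = b} ↪ {i // g.val i = b}) := by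
          rw [Fintype.card_sigma]; congr 1; funext g; rw [Fintype.card_pi]
      _ = ∑ g : C, ∏ b, (k b).factorial := by
          apply Finset.sum_congr rfl
          intro g _
          apply Finset.prod_congr rfl
          intro b _
          rw [Fintype.card_embedding_eq]
          have h1 : Fintype.card {i // f₀ i = b} = k b := by rw [Fintype.card_subtype, hf₀ b]
          have h2 : Fintype.card {i // g.val i = b} = k b := by rw [Fintype.card_subtype, g.prop b]
          rw [h1, h2, Nat.descFactorial_self]
      _ = Fintype.card C * ∏ b, (k b).factorial := by
          rw [Finset.sum_const, smul_eq_mul, Finset.card_univ]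
  have hspec := Nat.multinomial_spec (univ : Finset 𝒴) k
  have hpos : 0 < ∏ b, (k b).factorial := prod_pos fun b _ => (k b).factorial_pos
  apply Nat.le_of_mul_le_mul_right _ hpos
  calc Nat.multinomial univ k * ∏ b, (k b).factorial
      = (∑ b, k b).factorial := by rw [mul_comm]; exact hspec
    _ = (Fintype.card ι).factorial := by rw [hk]
    _ = Fintype.card (Equiv.Perm ι) := (Fintype.card_perm).symm
    _ ≤ Fintype.card C * ∏ b, (k b).factorial := key

-- combining over the first coordinate
lemma aux_Tcard {𝒳 𝒴 : Type*} [Fintype 𝒳] [DecidableEq 𝒳] [Fintype 𝒴] [DecidableEq 𝒴]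
    {n : ℕ} (x : Fin n → 𝒳) (N : 𝒳 → 𝒴 → ℕ)
    (hrow : ∀ a, (univ.filter fun i => x i = a).card = ∑ b, N a b) :
    ∏ a, Nat.multinomial univ (N a)
      ≤ Fintype.card {y : Fin n → 𝒴 // ∀ a b, (univ.filter fun i => x i = a ∧ y i = b).card = N a b} := by
  set Sub := fun a : 𝒳 => {g : {i : Fin n // x i = a} → 𝒴 // ∀ b, (univ.filter fun j => g j = b).card = N a b}
  have theta_eq : ∀ (G : ∀ a, Sub a) (i : Fin n) (a : 𝒳) (hi : x i = a),
      (G (x i)).val ⟨i, rfl⟩ = (G a).val ⟨i, hi⟩ := by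
    intro G i a hi; subst hi; rfl
  have hcount : ∀ (G : ∀ a, Sub a) (a : 𝒳) (b : 𝒴),
      (univ.filter fun i : Fin n => x i = a ∧ (G (x i)).val ⟨i, rfl⟩ = b).card
        = (univ.filter fun j : {i : Fin n // x i = a} => (G a).val j = b).card := by
    intro G a b
    apply Finset.card_bij (fun i hi => (⟨i, by
        simp only [mem_filter, mem_univ, true_and] at hi; exact hi.1⟩ : {i : Fin n // x i = a}))
    · intro i hi
      simp only [mem_filter, mem_univ, true_and] at hi ⊢
      rw [← theta_eq G i a hi.1]; exact hi.2
    · intro i hi j hj h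
      exact congrArg Subtype.val h
    · intro j hj
      simp only [mem_filter, mem_univ, true_and] at hj
      refine ⟨j.val, ?_, Subtype.ext rfl⟩
      simp only [mem_filter, mem_univ, true_and]
      exact ⟨j.prop, by rw [theta_eq G j.val a j.prop]; exact hj⟩
  set Θ : (∀ a, Sub a) → {y : Fin n → 𝒴 // ∀ a b, (univ.filter fun i => x i = a ∧ y i = b).card = N a b} :=
    fun G => ⟨fun i => (G (x i)).val ⟨i, rfl⟩, fun a b => by rw [hcount G a b]; exact (G a).prop b⟩
  have hinj : Function.Injective Θ := by
    intro G G' h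
    have hfun := congrArg Subtype.val h
    funext a
    apply Subtype.ext
    funext j
    obtain ⟨i, hi⟩ := j
    calc (G a).val ⟨i, hi⟩ = (G (x i)).val ⟨i, rfl⟩ := (theta_eq G i a hi).symm
      _ = (G' (x i)).val ⟨i, rfl⟩ := congrFun hfun i
      _ = (G' a).val ⟨i, hi⟩ := theta_eq G' i a hi
  calc ∏ a, Nat.multinomial univ (N a) ≤ ∏ a, Fintype.card (Sub a) := by
        apply Finset.prod_le_prod'
        intro a _
        apply aux_CL
        rw [← hrow a, Fintype.card_subtype]
    _ = Fintype.card (∀ a, Sub a) := (Fintype.card_pi).symm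
    _ ≤ _ := Fintype.card_le_of_injective Θ hinj

-- the exponential identity
lemma aux_exp_eq {𝒳 𝒴 : Type*} [Fintype 𝒳] [Fintype 𝒴]
    (n : ℕ) (hn : 0 < n) (P : 𝒳 → ℝ) (hP0 : ∀ a, 0 ≤ P a) (W Q : 𝒳 → 𝒴 → ℝ)
    (hW0 : ∀ a b, 0 ≤ W a b) (hW1 : ∀ a, ∑ b, W a b = 1) (hQ0 : ∀ a b, 0 ≤ Q a b)
    (N : 𝒳 → 𝒴 → ℕ) (hNR : ∀ a b, (N a b : ℝ) = n * (P a * W a b))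
    (habs : ∀ a b, 0 < P a → Q a b = 0 → W a b = 0) :
    Real.exp (-(n : ℝ) * condKLReal P W Q)
      = ∏ a, ∏ b, (((∑ b', N a b' : ℕ) : ℝ) * Q a b / (N a b : ℝ)) ^ (N a b) := by
  have hnR : (0 : ℝ) < n := Nat.cast_pos.mpr hn
  have hm : ∀ a, ((∑ b', N a b' : ℕ) : ℝ) = n * P a := by
    intro a
    push_cast
    rw [Finset.sum_congr rfl (fun b _ => hNR a b), ← Finset.mul_sum, ← Finset.mul_sum, hW1 a,
      mul_one]
  have hterm : ∀ a b,
      (if W a b = 0 then 0 else -((n : ℝ) * P a) * (W a b * Real.log (W a b / Q a b)))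
        = (N a b : ℝ) * Real.log (((∑ b', N a b' : ℕ) : ℝ) * Q a b / (N a b : ℝ)) := by
    intro a b
    by_cases hW : W a b = 0
    · have hN0 : (N a b : ℝ) = 0 := by rw [hNR, hW]; ring
      simp [hW, hN0]
    · rw [if_neg hW]
      by_cases hN : (N a b : ℝ) = 0
      · have hPa : P a = 0 := by
          have h0 : (n : ℝ) * (P a * W a b) = 0 := by rw [← hNR a b, hN]
          rcases mul_eq_zero.mp h0 with h | h
          · exact absurd h (ne_of_gt hnR)
          · rcases mul_eq_zero.mp h with h' | h'
            · exact h'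
            · exact absurd h' hW
        rw [hN, hPa]; ring
      · have hPa : 0 < P a := by
          rcases (hP0 a).lt_or_eq with h | h
          · exact h
          · exfalso; apply hN; rw [hNR, ← h]; ring
        have hWpos : 0 < W a b := lt_of_le_of_ne (hW0 a b) (Ne.symm hW)
        have hQpos : 0 < Q a b :=
          lt_of_le_of_ne (hQ0 a b) (fun h => hW (habs a b hPa h.symm))
        rw [hm a]
        have harg : ((n : ℝ) * P a) * Q a b / (N a b : ℝ) = (W a b / Q a b)⁻¹ := by
          rw [hNR]
          field_simp
        rw [harg, Real.log_inv, hNR]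
        ring
  have hsum : -(n : ℝ) * condKLReal P W Q
      = ∑ a, ∑ b, (N a b : ℝ) * Real.log (((∑ b', N a b' : ℕ) : ℝ) * Q a b / (N a b : ℝ)) := by
    unfold condKLReal klReal
    rw [Finset.mul_sum]
    apply Finset.sum_congr rfl
    intro a _
    rw [← mul_assoc, Finset.mul_sum]
    apply Finset.sum_congr rfl
    intro b _
    rw [neg_mul, mul_ite, mul_zero]
    exact hterm a b
  rw [hsum]
  rw [Real.exp_sum]
  apply Finset.prod_congr rfl
  intro a _
  rw [Real.exp_sum]
  apply Finset.prod_congr rfl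
  intro b _
  by_cases hN : N a b = 0
  · simp [hN]
  · have hNpos : 0 < (N a b : ℝ) := Nat.cast_pos.mpr (Nat.pos_of_ne_zero hN)
    have hWpos : 0 < W a b := by
      by_contra h
      apply hN
      have hw0 : W a b = 0 := le_antisymm (not_lt.mp h) (hW0 a b)
      have : (N a b : ℝ) = 0 := by rw [hNR, hw0]; ring
      exact_mod_cast this
    have hPa : 0 < P a := by
      by_contra h
      apply hN
      have hp0 : P a = 0 := le_antisymm (not_lt.mp h) (hP0 a)
      have : (N a b : ℝ) = 0 := by rw [hNR, hp0]; ring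
      exact_mod_cast this
    have hQpos : 0 < Q a b :=
      lt_of_le_of_ne (hQ0 a b) (fun h => ne_of_gt hWpos (habs a b hPa h.symm))
    have hargpos : 0 < ((∑ b', N a b' : ℕ) : ℝ) * Q a b / (N a b : ℝ) := by
      rw [hm a]
      positivity
    rw [mul_comm ((N a b : ℝ)) _, Real.exp_mul, Real.exp_log hargpos, Real.rpow_natCast]

end Aux

/-- conditional-type lower bound: for a joint `n`-type `(P, W)` and a
sequence `xⁿ` of type `P`, the probability under `∏ᵢ Q(·|xᵢ)` that `(xⁿ, Yⁿ)` has
joint type `P·W` is at least `(n+1)^{-|𝒳||𝒴|} e^{-n D(W‖Q|P)}`. -/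
theorem stmt5 {𝒳 𝒴 : Type*} [Fintype 𝒳] [Fintype 𝒴] [DecidableEq 𝒳] [DecidableEq 𝒴]
    (n : ℕ) (hn : 0 < n)
    (P : 𝒳 → ℝ) (hP : IsPMF P) (W Q : 𝒳 → 𝒴 → ℝ)
    (hW : ∀ a, IsPMF (W a)) (hQ : ∀ a, IsPMF (Q a))
    (x : Fin n → 𝒳) (hx : empDist x = P)
    (hjtype : ∀ a b, ∃ k : ℕ, P a * W a b = (k : ℝ) / n)
    (habs : ∀ a b, 0 < P a → Q a b = 0 → W a b = 0) :
    (((n : ℝ) + 1) ^ (Fintype.card 𝒳 * Fintype.card 𝒴))⁻¹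
        * Real.exp (-(n : ℝ) * condKLReal P W Q)
      ≤ ∑ y : Fin n → 𝒴,
          Set.indicator {y : Fin n → 𝒴 | jointType x y = fun p => P p.1 * W p.1 p.2}
            (fun y => ∏ i, Q (x i) (y i)) y := by
  classical
  have hnR : (0 : ℝ) < n := Nat.cast_pos.mpr hn
  set N : 𝒳 → 𝒴 → ℕ := fun a b => (hjtype a b).choose with hNdef
  have hNspec : ∀ a b, P a * W a b = (N a b : ℝ) / n := fun a b => (hjtype a b).choose_spec
  have hNR : ∀ a b, (N a b : ℝ) = n * (P a * W a b) := by
    intro a b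
    rw [hNspec a b]
    field_simp
  have hm : ∀ a, ((∑ b, N a b : ℕ) : ℝ) = n * P a := by
    intro a
    push_cast
    rw [Finset.sum_congr rfl (fun b _ => hNR a b), ← Finset.mul_sum, ← Finset.mul_sum, (hW a).2,
      mul_one]
  have hrow : ∀ a, (univ.filter fun i => x i = a).card = ∑ b, N a b := by
    intro a
    have h1 : ((univ.filter fun i => x i = a).card : ℝ) / n = P a := congrFun hx a
    have h2 : ((univ.filter fun i => x i = a).card : ℝ) = ((∑ b, N a b : ℕ) : ℝ) := by
      rw [hm a, ← h1]
      rw [mul_div_assoc', eq_div_iff hnR.ne', mul_comm]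
    exact_mod_cast h2
  have hmn : ∀ a, (∑ b, N a b) ≤ n := by
    intro a
    rw [← hrow a]
    calc (univ.filter fun i => x i = a).card ≤ (univ : Finset (Fin n)).card := card_filter_le _ _
      _ = n := by simp
  -- membership characterization
  have hmem : ∀ y : Fin n → 𝒴, ((jointType x y = fun p => P p.1 * W p.1 p.2)
      ↔ ∀ a b, (univ.filter fun i => x i = a ∧ y i = b).card = N a b) := by
    intro y
    rw [funext_iff]
    constructor
    · intro h a b
      have h1 := h (a, b)
      simp only [jointType] at h1
      rw [hNspec a b] at h1
      field_simp at h1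
      exact_mod_cast h1
    · rintro h ⟨a, b⟩
      simp only [jointType]
      rw [hNspec a b, h a b]
  -- rewrite the sum
  set T := univ.filter (fun y : Fin n → 𝒴 =>
    ∀ a b, (univ.filter fun i => x i = a ∧ y i = b).card = N a b) with hTdef
  have hsum : (∑ y : Fin n → 𝒴,
      Set.indicator {y : Fin n → 𝒴 | jointType x y = fun p => P p.1 * W p.1 p.2}
        (fun y => ∏ i, Q (x i) (y i)) y)
      = ∑ y ∈ T, ∏ i, Q (x i) (y i) := by
    rw [hTdef, Finset.sum_filter]
    apply Finset.sum_congr rfl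
    intro y _
    rw [Set.indicator_apply]
    exact if_congr (by rw [Set.mem_setOf_eq]; exact hmem y) rfl rfl
  -- per-sequence probability
  have hprodQ : ∀ y : Fin n → 𝒴, (∀ a b, (univ.filter fun i => x i = a ∧ y i = b).card = N a b) →
      (∏ i, Q (x i) (y i)) = ∏ a, ∏ b, Q a b ^ N a b := by
    intro y hy
    have h1 : ∏ c : 𝒳 × 𝒴, ∏ i ∈ univ.filter (fun i => (x i, y i) = c), Q (x i) (y i)
        = ∏ i, Q (x i) (y i) :=
      Finset.prod_fiberwise_of_maps_to (fun i _ => mem_univ _) _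
    rw [← h1, Fintype.prod_prod_type]
    apply Finset.prod_congr rfl
    intro a _
    apply Finset.prod_congr rfl
    intro b _
    have h2 : ∀ i ∈ univ.filter (fun i => (x i, y i) = (a, b)), Q (x i) (y i) = Q a b := by
      intro i hi
      simp only [mem_filter, Prod.mk.injEq] at hi
      rw [hi.2.1, hi.2.2]
    rw [Finset.prod_congr rfl h2, Finset.prod_const]
    congr 1
    rw [← hy a b]
    congr 1
    ext i
    simp [Prod.ext_iff]
  have hTsum : ∑ y ∈ T, ∏ i, Q (x i) (y i) = (T.card : ℝ) * ∏ a, ∏ b, Q a b ^ N a b := by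
    rw [Finset.sum_congr rfl (fun y hy => hprodQ y ((mem_filter.mp (hTdef ▸ hy)).2)),
      Finset.sum_const, nsmul_eq_mul]
  have hTcard : (∏ a, Nat.multinomial univ (N a)) ≤ T.card := by
    have h := aux_Tcard x N hrow
    rwa [Fintype.card_subtype] at h
  -- analytic quantities
  set C : ℝ := ∏ a, ∏ b, Q a b ^ N a b with hCdef
  have hC0 : 0 ≤ C := by
    apply Finset.prod_nonneg
    intro a _
    exact Finset.prod_nonneg fun b _ => pow_nonneg ((hQ a).1 b) _
  set Pn : ℝ := ∏ a, ∏ b, (N a b : ℝ) ^ (N a b) with hPndef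
  have hPn : 0 < Pn := by
    apply Finset.prod_pos
    intro a _
    apply Finset.prod_pos
    intro b _
    rcases Nat.eq_zero_or_pos (N a b) with h | h
    · rw [h]; norm_num
    · exact pow_pos (Nat.cast_pos.mpr h) _
  have hE := aux_exp_eq n hn P hP.1 W Q (fun a b => (hW a).1 b) (fun a => (hW a).2)
    (fun a b => (hQ a).1 b) N hNR habs
  rw [hsum, hTsum]
  rw [inv_mul_le_iff₀ (by positivity)]
  -- main estimate
  have hmain : Real.exp (-(n : ℝ) * condKLReal P W Q) * Pn
      ≤ (((n : ℝ) + 1) ^ (Fintype.card 𝒳 * Fintype.card 𝒴) * ((T.card : ℝ) * C)) * Pn := by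
    have hEPn : Real.exp (-(n : ℝ) * condKLReal P W Q) * Pn
        = ∏ a, (((∑ b, N a b : ℕ) : ℝ) ^ (∑ b, N a b) * ∏ b, Q a b ^ N a b) := by
      rw [hE, hPndef, ← Finset.prod_mul_distrib]
      apply Finset.prod_congr rfl
      intro a _
      rw [← Finset.prod_mul_distrib]
      have hfac : ∀ b, (((∑ b', N a b' : ℕ) : ℝ) * Q a b / (N a b : ℝ)) ^ (N a b) * (N a b : ℝ) ^ (N a b)
          = ((∑ b', N a b' : ℕ) : ℝ) ^ (N a b) * Q a b ^ (N a b) := by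
        intro b
        by_cases h : N a b = 0
        · rw [h]; norm_num
        · rw [← mul_pow, ← mul_pow]
          congr 1
          have hNne : ((N a b : ℝ)) ≠ 0 := Nat.cast_ne_zero.mpr h
          field_simp
      rw [Finset.prod_congr rfl (fun b _ => hfac b), Finset.prod_mul_distrib,
        Finset.prod_pow_eq_pow_sum]
    rw [hEPn]
    have hstep : ∀ a ∈ (univ : Finset 𝒳),
        ((∑ b, N a b : ℕ) : ℝ) ^ (∑ b, N a b) * ∏ b, Q a b ^ N a b
          ≤ (((n : ℝ) + 1) ^ (Fintype.card 𝒴) * (Nat.multinomial univ (N a) : ℝ)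
              * ∏ b, (N a b : ℝ) ^ (N a b)) * ∏ b, Q a b ^ N a b := by
      intro a _
      apply mul_le_mul_of_nonneg_right _ (Finset.prod_nonneg fun b _ => pow_nonneg ((hQ a).1 b) _)
      calc ((∑ b, N a b : ℕ) : ℝ) ^ (∑ b, N a b)
          ≤ ((∑ b, N a b : ℕ) + 1 : ℝ) ^ (Fintype.card 𝒴) * (Nat.multinomial univ (N a) : ℝ)
              * ∏ b, (N a b : ℝ) ^ (N a b) := aux_A (N a) (∑ b, N a b) rfl
        _ ≤ (((n : ℝ) + 1) ^ (Fintype.card 𝒴) * (Nat.multinomial univ (N a) : ℝ)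
              * ∏ b, (N a b : ℝ) ^ (N a b)) := by
            apply mul_le_mul_of_nonneg_right _ (le_of_lt (by
              apply Finset.prod_pos
              intro b _
              rcases Nat.eq_zero_or_pos (N a b) with h | h
              · rw [h]; norm_num
              · exact pow_pos (Nat.cast_pos.mpr h) _))
            apply mul_le_mul_of_nonneg_right _ (Nat.cast_nonneg _)
            apply pow_le_pow_left₀ (by positivity)
            have : ((∑ b, N a b : ℕ) : ℝ) ≤ (n : ℝ) := Nat.cast_le.mpr (hmn a)
            linarith
    calc ∏ a, (((∑ b, N a b : ℕ) : ℝ) ^ (∑ b, N a b) * ∏ b, Q a b ^ N a b)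
        ≤ ∏ a, ((((n : ℝ) + 1) ^ (Fintype.card 𝒴) * (Nat.multinomial univ (N a) : ℝ)
            * ∏ b, (N a b : ℝ) ^ (N a b)) * ∏ b, Q a b ^ N a b) := by
          apply Finset.prod_le_prod _ hstep
          intro a _
          apply mul_nonneg (pow_nonneg (Nat.cast_nonneg _) _)
          exact Finset.prod_nonneg fun b _ => pow_nonneg ((hQ a).1 b) _
      _ = ((n : ℝ) + 1) ^ (Fintype.card 𝒳 * Fintype.card 𝒴)
            * ((∏ a, (Nat.multinomial univ (N a) : ℝ)) * Pn * C) := by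
          rw [Finset.prod_mul_distrib, Finset.prod_mul_distrib, Finset.prod_mul_distrib,
            Finset.prod_const, Finset.card_univ, ← pow_mul, hPndef, hCdef,
            mul_comm (Fintype.card 𝒴) (Fintype.card 𝒳)]
          ring
      _ ≤ ((n : ℝ) + 1) ^ (Fintype.card 𝒳 * Fintype.card 𝒴) * ((T.card : ℝ) * Pn * C) := by
          apply mul_le_mul_of_nonneg_left _ (by positivity)
          apply mul_le_mul_of_nonneg_right _ hC0
          apply mul_le_mul_of_nonneg_right _ (le_of_lt hPn)
          calc (∏ a, (Nat.multinomial univ (N a) : ℝ)) = ((∏ a, Nat.multinomial univ (N a) : ℕ) : ℝ) := by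
                push_cast; rfl
            _ ≤ (T.card : ℝ) := Nat.cast_le.mpr hTcard
      _ = (((n : ℝ) + 1) ^ (Fintype.card 𝒳 * Fintype.card 𝒴) * ((T.card : ℝ) * C)) * Pn := by ring
  exact le_of_mul_le_mul_right hmain hPn
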